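/- arXiv:1009.2142 — 4 statements merged into one kernel-verified Lean document; each statement's English description precedes it below -/
import Mathlib

section
/- For every strict total order ≺ on ℤ, the derived system S_≺ is a consistent digital line segments system, i.e., it satisfies axioms (S1)–(S5). -/
/- `upAt prec p q t` : the level `t` is among the `q.2 - p.2` greatest elements
(w.r.t. the order `prec`) of the segment interval `[p.1+p.2, q.1+q.2-1]`. -/
open Classical in
noncomputable def upAt (prec : ℤ → ℤ → Prop) (p q : ℤ × ℤ) (t : ℤ) : Prop :=
  (((Finset.Ico (p.1 + p.2) (q.1 + q.2)).filter (fun u => u = t ∨ prec t u)).card : ℤ)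
    ≤ q.2 - p.2

/- The digital segment derived from `prec`, for `p.1 ≤ q.1` and `p.2 ≤ q.2`:
the monotone staircase from `p` to `q` that goes up at level `t` exactly when
`upAt prec p q t` holds. -/
open Classical in
noncomputable def digSegNE (prec : ℤ → ℤ → Prop) (p q : ℤ × ℤ) : Set (ℤ × ℤ) :=
  { r | p.1 + p.2 ≤ r.1 + r.2 ∧ r.1 + r.2 ≤ q.1 + q.2 ∧
    r.2 = p.2 + (((Finset.Ico (p.1 + p.2) (r.1 + r.2)).filter (fun t => upAt prec p q t)).card : ℤ) }

/- The digital segment for `p.1 ≤ q.1` (reflecting over the `y`-axis if `p.2 > q.2`). -/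
noncomputable def digSegAux (prec : ℤ → ℤ → Prop) (p q : ℤ × ℤ) : Set (ℤ × ℤ) :=
  if p.2 ≤ q.2 then digSegNE prec p q
  else (fun r : ℤ × ℤ => (-r.1, r.2)) '' digSegNE prec (-q.1, q.2) (-p.1, p.2)

/- The full system of digital segments `S_≺` derived from the order `prec`. -/
noncomputable def digSeg (prec : ℤ → ℤ → Prop) (p q : ℤ × ℤ) : Set (ℤ × ℤ) :=
  if p.1 ≤ q.1 then digSegAux prec p q else digSegAux prec q p

/- Adjacency in the grid graph on `ℤ²`. -/
def GridAdj (p q : ℤ × ℤ) : Prop :=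
  (|q.1 - p.1| = 1 ∧ q.2 = p.2) ∨ (q.1 = p.1 ∧ |q.2 - p.2| = 1)

/- `S` is the vertex set of a path from `p` to `q` in the grid graph on `ℤ²`. -/
def IsGridPath (p q : ℤ × ℤ) (S : Set (ℤ × ℤ)) : Prop :=
  ∃ n : ℕ, ∃ f : Fin (n + 1) → ℤ × ℤ, f 0 = p ∧ f (Fin.last n) = q ∧
    Function.Injective f ∧ (∀ i : Fin n, GridAdj (f i.castSucc) (f i.succ)) ∧
    Set.range f = S

/- A consistent digital line segments system (CDS): axioms (S1)-(S5). -/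
structure IsCDS (S : ℤ × ℤ → ℤ × ℤ → Set (ℤ × ℤ)) : Prop where
  path : ∀ p q, IsGridPath p q (S p q)                     -- (S1)
  symm : ∀ p q, S p q = S q p                               -- (S2)
  subseg : ∀ p q r, r ∈ S p q → S p r ⊆ S p q               -- (S3)
  prolong : ∀ p q, ∃ r, r ∉ S p q ∧ S p q ⊆ S p r           -- (S4)
  monoV : ∀ p q, p.1 = q.1 → ∀ r ∈ S p q, r.1 = p.1         -- (S5), vertical
  monoH : ∀ p q, p.2 = q.2 → ∀ r ∈ S p q, r.2 = p.2         -- (S5), horizontal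

/- The inclusion `ℤ² ⊆ ℝ²` (Euclidean plane). -/
noncomputable def toR2 (p : ℤ × ℤ) : EuclideanSpace ℝ (Fin 2) := WithLp.toLp 2 ![(p.1 : ℝ), (p.2 : ℝ)]

/- The 2-adic valuation of an integer, with `v2 0 = ⊤`. -/
noncomputable def v2 (k : ℤ) : ℕ∞ := if k = 0 then ⊤ else (padicValInt 2 k : ℕ∞)

/- The total order on `ℤ` defined via 2-adic valuations. -/
def vorder (a b : ℤ) : Prop :=
  ∃ i : ℕ, v2 (a - i) < v2 (b - i) ∧ ∀ j : ℕ, j < i → v2 (a - j) = v2 (b - j)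


section CDSDev

open Classical

variable (prec : ℤ → ℤ → Prop) [IsStrictTotalOrder ℤ prec]

/-- reflection over the y-axis -/
def refl2 : ℤ × ℤ → ℤ × ℤ := fun r : ℤ × ℤ => (-r.1, r.2)

@[simp] lemma refl2_refl2 (r : ℤ × ℤ) : refl2 (refl2 r) = r := by
  simp [refl2]

@[simp] lemma refl2_fst (r : ℤ × ℤ) : (refl2 r).1 = -r.1 := rfl
@[simp] lemma refl2_snd (r : ℤ × ℤ) : (refl2 r).2 = r.2 := rfl

lemma refl2_injective : Function.Injective refl2 := by
  intro x y h
  have h2 := congrArg refl2 h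
  simpa using h2

lemma refl2_image_image (S : Set (ℤ × ℤ)) : refl2 '' (refl2 '' S) = S := by
  ext r
  constructor
  · rintro ⟨x, ⟨y, hy, rfl⟩, rfl⟩
    simpa using hy
  · intro hr
    exact ⟨refl2 r, ⟨r, hr, rfl⟩, by simp⟩

lemma mem_refl2_image {S : Set (ℤ × ℤ)} {r : ℤ × ℤ} :
    r ∈ refl2 '' S ↔ refl2 r ∈ S := by
  constructor
  · rintro ⟨x, hx, rfl⟩
    simpa using hx
  · intro h
    exact ⟨refl2 r, h, by simp⟩

lemma prod_eq {x y : ℤ × ℤ} (h1 : x.1 = y.1) (h2 : x.2 = y.2) : x = y := by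
  cases x; cases y; simp_all

lemma upAt_mono {p q : ℤ × ℤ} {t u : ℤ} (h : upAt prec p q t) (htu : prec t u) :
    upAt prec p q u := by
  unfold upAt at h ⊢
  have hsub : (Finset.Ico (p.1 + p.2) (q.1 + q.2)).filter (fun v => v = u ∨ prec u v) ⊆
      (Finset.Ico (p.1 + p.2) (q.1 + q.2)).filter (fun v => v = t ∨ prec t v) := by
    intro v hv
    rw [Finset.mem_filter] at hv ⊢
    refine ⟨hv.1, ?_⟩
    rcases hv.2 with rfl | hu
    · exact Or.inr htu
    · exact Or.inr (trans_of prec htu hu)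
  have hc := Finset.card_le_card hsub
  omega

lemma filter_eq_of_upClosed {F : Finset ℤ} {P Q : ℤ → Prop}
    [DecidablePred P] [DecidablePred Q]
    (hP : ∀ t u, P t → prec t u → P u) (hQ : ∀ t u, Q t → prec t u → Q u)
    (hcard : (F.filter P).card = (F.filter Q).card) :
    F.filter P = F.filter Q := by
  have key : F.filter P ⊆ F.filter Q ∨ F.filter Q ⊆ F.filter P := by
    by_contra hc
    push_neg at hc
    obtain ⟨x, hx1, hx2⟩ := Finset.not_subset.1 hc.1
    obtain ⟨y, hy1, hy2⟩ := Finset.not_subset.1 hc.2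
    rw [Finset.mem_filter] at hx1 hy1
    rcases trichotomous_of prec x y with h | h | h
    · exact hy2 (Finset.mem_filter.2 ⟨hy1.1, hP _ _ hx1.2 h⟩)
    · subst h
      exact hx2 (Finset.mem_filter.2 ⟨hx1.1, hy1.2⟩)
    · exact hx2 (Finset.mem_filter.2 ⟨hx1.1, hQ _ _ hy1.2 h⟩)
  rcases key with h | h
  · exact Finset.eq_of_subset_of_card_le h hcard.ge
  · exact (Finset.eq_of_subset_of_card_le h hcard.le).symm

lemma card_filter_Ico_add (P : ℤ → Prop) [DecidablePred P] {a s s' : ℤ}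
    (h1 : a ≤ s) (h2 : s ≤ s') :
    ((Finset.Ico a s').filter P).card
      = ((Finset.Ico a s).filter P).card + ((Finset.Ico s s').filter P).card := by
  rw [← Finset.Ico_union_Ico_eq_Ico h1 h2, Finset.filter_union,
    Finset.card_union_of_disjoint
      (Finset.disjoint_filter_filter (Finset.Ico_disjoint_Ico_consecutive a s s'))]

lemma card_filter_Ico_succ (P : ℤ → Prop) [DecidablePred P] {a s : ℤ} (h : a ≤ s) :
    ((Finset.Ico a (s+1)).filter P).card
      = ((Finset.Ico a s).filter P).card + (if P s then 1 else 0) := by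
  rw [card_filter_Ico_add P h (by omega : s ≤ s + 1)]
  congr 1
  have hs : Finset.Ico s (s+1) = {s} := by
    ext x
    simp only [Finset.mem_Ico, Finset.mem_singleton]
    omega
  rw [hs, Finset.filter_singleton]
  split
  · simp
  · simp

open Classical in
lemma card_filter_upAt {p q : ℤ × ℤ} (h1 : p.1 ≤ q.1) (h2 : p.2 ≤ q.2) :
    (((Finset.Ico (p.1 + p.2) (q.1 + q.2)).filter (fun t => upAt prec p q t)).card : ℤ)
      = q.2 - p.2 := by
  set a := p.1 + p.2 with ha
  set b := q.1 + q.2 with hb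
  set F := Finset.Ico a b with hF
  set N := F.card with hN
  have hNval : (N : ℤ) = b - a := by
    rw [hN, hF, Int.card_Ico]
    omega
  set f : ℤ → ℕ := fun t => (F.filter (fun u => prec u t)).card with hf
  have hsplit : ∀ t : ℤ, (F.filter (fun u => u = t ∨ prec t u)).card + f t = N := by
    intro t
    have hneg : F.filter (fun u => ¬(u = t ∨ prec t u)) = F.filter (fun u => prec u t) := by
      apply Finset.filter_congr
      intro u _
      constructor
      · intro hu
        push_neg at hu
        rcases trichotomous_of prec u t with hh | hh | hh
        · exact hh
        · exact absurd hh hu.1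
        · exact absurd hh hu.2
      · intro hu
        push_neg
        exact ⟨fun he => irrefl_of prec t (he ▸ hu), fun hh => asymm_of prec hu hh⟩
    have h0 := Finset.card_filter_add_card_filter_not
      (s := F) (p := fun u => u = t ∨ prec t u)
    rw [hneg] at h0
    simp only [hf]
    rw [hN]
    exact h0
  have hchar : ∀ t, upAt prec p q t ↔ (N : ℤ) ≤ (q.2 - p.2) + (f t : ℤ) := by
    intro t
    have hs := hsplit t
    constructor
    · intro h
      have h' : (((Finset.Ico (p.1 + p.2) (q.1 + q.2)).filter
          (fun u => u = t ∨ prec t u)).card : ℤ) ≤ q.2 - p.2 := h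
      rw [← ha, ← hb, ← hF] at h'
      omega
    · intro h
      show (((Finset.Ico (p.1 + p.2) (q.1 + q.2)).filter
          (fun u => u = t ∨ prec t u)).card : ℤ) ≤ q.2 - p.2
      rw [← ha, ← hb, ← hF]
      omega
  have hfmono : ∀ t ∈ F, ∀ u, prec t u → f t < f u := by
    intro t ht u htu
    have hsub : insert t (F.filter (fun v => prec v t)) ⊆ F.filter (fun v => prec v u) := by
      intro v hv
      rcases Finset.mem_insert.1 hv with rfl | hv
      · exact Finset.mem_filter.2 ⟨ht, htu⟩
      · obtain ⟨hv1, hv2⟩ := Finset.mem_filter.1 hv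
        exact Finset.mem_filter.2 ⟨hv1, trans_of prec hv2 htu⟩
    have hcard := Finset.card_le_card hsub
    have hnotmem : t ∉ F.filter (fun v => prec v t) :=
      fun hmem => irrefl_of prec t (Finset.mem_filter.1 hmem).2
    rw [Finset.card_insert_of_notMem hnotmem] at hcard
    simp only [hf]
    omega
  have hinj : Set.InjOn f (F : Set ℤ) := by
    intro t ht u hu htu
    by_contra hne
    rcases trichotomous_of prec t u with h | h | h
    · exact absurd htu (Nat.ne_of_lt (hfmono t (Finset.mem_coe.1 ht) u h))
    · exact hne h
    · exact absurd htu.symm (Nat.ne_of_lt (hfmono u (Finset.mem_coe.1 hu) t h))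
  have hlt : ∀ t ∈ F, f t < N := by
    intro t ht
    have hsub : F.filter (fun v => prec v t) ⊆ F.erase t := by
      intro v hv
      obtain ⟨hv1, hv2⟩ := Finset.mem_filter.1 hv
      exact Finset.mem_erase.2 ⟨fun he => irrefl_of prec t (he ▸ hv2), hv1⟩
    have hc1 := Finset.card_le_card hsub
    have hc2 := Finset.card_erase_lt_of_mem ht
    simp only [hf]
    omega
  have himage : F.image f = Finset.range N := by
    apply Finset.eq_of_subset_of_card_le
    · intro j hj
      obtain ⟨t, ht, rfl⟩ := Finset.mem_image.1 hj
      exact Finset.mem_range.2 (hlt t ht)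
    · rw [Finset.card_range, Finset.card_image_of_injOn hinj]
  have hfilter : F.filter (fun t => upAt prec p q t)
      = F.filter (fun t => (N : ℤ) ≤ (q.2 - p.2) + (f t : ℤ)) :=
    Finset.filter_congr (fun t _ => hchar t)
  rw [hfilter]
  have hsub2 : Set.InjOn f ((F.filter (fun t => (N : ℤ) ≤ (q.2 - p.2) + (f t : ℤ))) : Set ℤ) :=
    hinj.mono (Finset.coe_subset.2 (Finset.filter_subset _ _))
  have hcard2 : (F.filter (fun t => (N : ℤ) ≤ (q.2 - p.2) + (f t : ℤ))).card
      = ((Finset.range N).filter (fun j : ℕ => (N : ℤ) ≤ (q.2 - p.2) + (j : ℤ))).card := by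
    rw [← himage, Finset.filter_image]
    exact (Finset.card_image_of_injOn hsub2).symm
  have hfin : (Finset.range N).filter (fun j : ℕ => (N : ℤ) ≤ (q.2 - p.2) + (j : ℤ))
      = Finset.Ico (N - (q.2 - p.2).toNat) N := by
    ext j
    simp only [Finset.mem_filter, Finset.mem_range, Finset.mem_Ico]
    omega
  rw [hcard2, hfin, Nat.card_Ico]
  omega

open Classical in
lemma mem_digSegNE {p q r : ℤ × ℤ} :
    r ∈ digSegNE prec p q ↔
      p.1 + p.2 ≤ r.1 + r.2 ∧ r.1 + r.2 ≤ q.1 + q.2 ∧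
      r.2 = p.2 + (((Finset.Ico (p.1 + p.2) (r.1 + r.2)).filter
        (fun t => upAt prec p q t)).card : ℤ) :=
  Iff.rfl

open Classical in
lemma digSegNE_vert {p q : ℤ × ℤ} (h1 : p.1 = q.1) (h2 : p.2 ≤ q.2) :
    digSegNE prec p q = {r : ℤ × ℤ | r.1 = p.1 ∧ p.2 ≤ r.2 ∧ r.2 ≤ q.2} := by
  have hup : ∀ s : ℤ, p.1 + p.2 ≤ s → s ≤ q.1 + q.2 →
      (((Finset.Ico (p.1 + p.2) s).filter (fun t => upAt prec p q t)).card : ℤ)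
        = s - (p.1 + p.2) := by
    intro s hs1 hs2
    rw [Finset.filter_true_of_mem, Int.card_Ico]
    · omega
    · intro t ht
      show (((Finset.Ico (p.1 + p.2) (q.1 + q.2)).filter
          (fun u => u = t ∨ prec t u)).card : ℤ) ≤ q.2 - p.2
      have hle := Finset.card_le_card
        (Finset.filter_subset (fun u => u = t ∨ prec t u) (Finset.Ico (p.1+p.2) (q.1+q.2)))
      have hc := Int.card_Ico (a := p.1 + p.2) (b := q.1 + q.2)
      omega
  ext r
  simp only [mem_digSegNE prec, Set.mem_setOf_eq]
  constructor
  · rintro ⟨hr1, hr2, hr3⟩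
    rw [hup _ hr1 hr2] at hr3
    refine ⟨by omega, by omega, by omega⟩
  · rintro ⟨hr1, hr2, hr3⟩
    refine ⟨by omega, by omega, ?_⟩
    rw [hup _ (by omega) (by omega)]
    omega

open Classical in
lemma digSegNE_horiz {p q : ℤ × ℤ} (h1 : p.1 ≤ q.1) (h2 : p.2 = q.2) :
    digSegNE prec p q = {r : ℤ × ℤ | r.2 = p.2 ∧ p.1 ≤ r.1 ∧ r.1 ≤ q.1} := by
  have hup : ∀ s : ℤ, s ≤ q.1 + q.2 →
      ((Finset.Ico (p.1 + p.2) s).filter (fun t => upAt prec p q t)).card = 0 := by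
    intro s hs
    rw [Finset.card_eq_zero, Finset.filter_eq_empty_iff]
    intro t ht
    rw [Finset.mem_Ico] at ht
    intro hUp
    have hUp' : (((Finset.Ico (p.1 + p.2) (q.1 + q.2)).filter
        (fun u => u = t ∨ prec t u)).card : ℤ) ≤ q.2 - p.2 := hUp
    have hmem : t ∈ (Finset.Ico (p.1 + p.2) (q.1 + q.2)).filter
        (fun u => u = t ∨ prec t u) :=
      Finset.mem_filter.2 ⟨Finset.mem_Ico.2 ⟨ht.1, by omega⟩, Or.inl rfl⟩
    have hpos := Finset.card_pos.2 ⟨t, hmem⟩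
    omega
  ext r
  simp only [mem_digSegNE prec, Set.mem_setOf_eq]
  constructor
  · rintro ⟨hr1, hr2, hr3⟩
    rw [hup _ hr2] at hr3
    refine ⟨by omega, by omega, by omega⟩
  · rintro ⟨hr1, hr2, hr3⟩
    refine ⟨by omega, by omega, ?_⟩
    rw [hup _ (by omega)]
    omega

open Classical in
lemma digSegNE_between {p q r : ℤ × ℤ} (h1 : p.1 ≤ q.1) (h2 : p.2 ≤ q.2)
    (hr : r ∈ digSegNE prec p q) :
    p.1 ≤ r.1 ∧ r.1 ≤ q.1 ∧ p.2 ≤ r.2 ∧ r.2 ≤ q.2 := by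
  obtain ⟨hr1, hr2, hr3⟩ := (mem_digSegNE prec).1 hr
  have htot := card_filter_upAt prec h1 h2
  have hadd := card_filter_Ico_add (fun t => upAt prec p q t) hr1 hr2
  have hc1 := Finset.card_le_card
    (Finset.filter_subset (fun t => upAt prec p q t) (Finset.Ico (p.1+p.2) (r.1+r.2)))
  have hc2 := Finset.card_le_card
    (Finset.filter_subset (fun t => upAt prec p q t) (Finset.Ico (r.1+r.2) (q.1+q.2)))
  have hI1 := Int.card_Ico (a := p.1 + p.2) (b := r.1 + r.2)
  have hI2 := Int.card_Ico (a := r.1 + r.2) (b := q.1 + q.2)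
  omega

open Classical in
lemma digSegNE_subseg_left {p q r : ℤ × ℤ} (h1 : p.1 ≤ q.1) (h2 : p.2 ≤ q.2)
    (hr : r ∈ digSegNE prec p q) : digSegNE prec p r ⊆ digSegNE prec p q := by
  obtain ⟨hb1, hb2, hb3, hb4⟩ := digSegNE_between prec h1 h2 hr
  obtain ⟨hr1, hr2, hr3⟩ := (mem_digSegNE prec).1 hr
  have hfe : (Finset.Ico (p.1 + p.2) (r.1 + r.2)).filter (fun t => upAt prec p r t)
      = (Finset.Ico (p.1 + p.2) (r.1 + r.2)).filter (fun t => upAt prec p q t) := by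
    apply filter_eq_of_upClosed prec
    · exact fun t u ht htu => upAt_mono prec ht htu
    · exact fun t u ht htu => upAt_mono prec ht htu
    · have hcr := card_filter_upAt prec (p := p) (q := r) hb1 hb3
      omega
  intro x hx
  obtain ⟨hx1, hx2, hx3⟩ := (mem_digSegNE prec).1 hx
  refine (mem_digSegNE prec).2 ⟨hx1, by omega, ?_⟩
  have hcong : (Finset.Ico (p.1 + p.2) (x.1 + x.2)).filter (fun t => upAt prec p r t)
      = (Finset.Ico (p.1 + p.2) (x.1 + x.2)).filter (fun t => upAt prec p q t) := by
    apply Finset.filter_congr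
    intro t ht
    rw [Finset.mem_Ico] at ht
    constructor
    · intro hu
      exact (Finset.mem_filter.1
        (hfe ▸ Finset.mem_filter.2 ⟨Finset.mem_Ico.2 ⟨ht.1, by omega⟩, hu⟩)).2
    · intro hu
      exact (Finset.mem_filter.1
        (hfe.symm ▸ Finset.mem_filter.2 ⟨Finset.mem_Ico.2 ⟨ht.1, by omega⟩, hu⟩)).2
  have hcc := congrArg Finset.card hcong
  omega

open Classical in
lemma digSegNE_subseg_right {p q r : ℤ × ℤ} (h1 : p.1 ≤ q.1) (h2 : p.2 ≤ q.2)
    (hr : r ∈ digSegNE prec p q) : digSegNE prec r q ⊆ digSegNE prec p q := by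
  obtain ⟨hb1, hb2, hb3, hb4⟩ := digSegNE_between prec h1 h2 hr
  obtain ⟨hr1, hr2, hr3⟩ := (mem_digSegNE prec).1 hr
  have htot := card_filter_upAt prec h1 h2
  have hadd := card_filter_Ico_add (fun t => upAt prec p q t) hr1 hr2
  have hfe : (Finset.Ico (r.1 + r.2) (q.1 + q.2)).filter (fun t => upAt prec r q t)
      = (Finset.Ico (r.1 + r.2) (q.1 + q.2)).filter (fun t => upAt prec p q t) := by
    apply filter_eq_of_upClosed prec
    · exact fun t u ht htu => upAt_mono prec ht htu
    · exact fun t u ht htu => upAt_mono prec ht htu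
    · have hcr := card_filter_upAt prec (p := r) (q := q) hb2 hb4
      omega
  intro x hx
  obtain ⟨hx1, hx2, hx3⟩ := (mem_digSegNE prec).1 hx
  refine (mem_digSegNE prec).2 ⟨by omega, hx2, ?_⟩
  have hcong : (Finset.Ico (r.1 + r.2) (x.1 + x.2)).filter (fun t => upAt prec r q t)
      = (Finset.Ico (r.1 + r.2) (x.1 + x.2)).filter (fun t => upAt prec p q t) := by
    apply Finset.filter_congr
    intro t ht
    rw [Finset.mem_Ico] at ht
    constructor
    · intro hu
      exact (Finset.mem_filter.1
        (hfe ▸ Finset.mem_filter.2 ⟨Finset.mem_Ico.2 ⟨ht.1, by omega⟩, hu⟩)).2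
    · intro hu
      exact (Finset.mem_filter.1
        (hfe.symm ▸ Finset.mem_filter.2 ⟨Finset.mem_Ico.2 ⟨ht.1, by omega⟩, hu⟩)).2
  have hadd2 := card_filter_Ico_add (fun t => upAt prec p q t)
    (a := p.1 + p.2) (s := r.1 + r.2) (s' := x.1 + x.2) hr1 hx1
  have hcc := congrArg Finset.card hcong
  omega

open Classical in
lemma digSegNE_extend {p q : ℤ × ℤ} (h1 : p.1 ≤ q.1) (h2 : p.2 ≤ q.2) :
    ∃ r : ℤ × ℤ, r.1 + r.2 = q.1 + q.2 + 1 ∧ q.1 ≤ r.1 ∧ q.2 ≤ r.2 ∧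
      q ∈ digSegNE prec p r := by
  by_cases h : upAt prec p (q.1, q.2 + 1) (q.1 + q.2)
  · refine ⟨(q.1, q.2 + 1), by show q.1 + (q.2 + 1) = q.1 + q.2 + 1; ring,
      le_refl _, by show q.2 ≤ q.2 + 1; omega, ?_⟩
    refine (mem_digSegNE prec).2 ⟨by omega, by show q.1 + q.2 ≤ q.1 + (q.2 + 1); omega, ?_⟩
    show q.2 = p.2 + (((Finset.Ico (p.1 + p.2) (q.1 + q.2)).filter
      (fun t => upAt prec p (q.1, q.2 + 1) t)).card : ℤ)
    have hcr : (((Finset.Ico (p.1 + p.2) (q.1 + (q.2 + 1))).filter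
        (fun t => upAt prec p (q.1, q.2 + 1) t)).card : ℤ) = q.2 + 1 - p.2 :=
      card_filter_upAt prec (p := p) (q := (q.1, q.2 + 1)) h1 (by show p.2 ≤ q.2 + 1; omega)
    have hstep := card_filter_Ico_succ (fun t => upAt prec p (q.1, q.2 + 1) t)
      (a := p.1 + p.2) (s := q.1 + q.2) (by omega)
    rw [show q.1 + (q.2 + 1) = q.1 + q.2 + 1 by ring] at hcr
    simp only [h, if_true] at hstep
    omega
  · refine ⟨(q.1 + 1, q.2), by show q.1 + 1 + q.2 = q.1 + q.2 + 1; ring,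
      by show q.1 ≤ q.1 + 1; omega, le_refl _, ?_⟩
    have h' : ¬ upAt prec p (q.1 + 1, q.2) (q.1 + q.2) := by
      intro hc
      apply h
      show (((Finset.Ico (p.1 + p.2) (q.1 + (q.2 + 1))).filter
        (fun u => u = (q.1 + q.2) ∨ prec (q.1 + q.2) u)).card : ℤ) ≤ q.2 + 1 - p.2
      have hc' : (((Finset.Ico (p.1 + p.2) (q.1 + 1 + q.2)).filter
          (fun u => u = (q.1 + q.2) ∨ prec (q.1 + q.2) u)).card : ℤ) ≤ q.2 - p.2 := hc
      rw [show q.1 + (q.2 + 1) = q.1 + 1 + q.2 by ring]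
      omega
    refine (mem_digSegNE prec).2 ⟨by omega, by show q.1 + q.2 ≤ q.1 + 1 + q.2; omega, ?_⟩
    show q.2 = p.2 + (((Finset.Ico (p.1 + p.2) (q.1 + q.2)).filter
      (fun t => upAt prec p (q.1 + 1, q.2) t)).card : ℤ)
    have hcr : (((Finset.Ico (p.1 + p.2) (q.1 + 1 + q.2)).filter
        (fun t => upAt prec p (q.1 + 1, q.2) t)).card : ℤ) = q.2 - p.2 :=
      card_filter_upAt prec (p := p) (q := (q.1 + 1, q.2))
        (by show p.1 ≤ q.1 + 1; omega) h2
    have hstep := card_filter_Ico_succ (fun t => upAt prec p (q.1 + 1, q.2) t)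
      (a := p.1 + p.2) (s := q.1 + q.2) (by omega)
    rw [show q.1 + 1 + q.2 = q.1 + q.2 + 1 by ring] at hcr
    simp only [h', if_false] at hstep
    omega

open Classical in
lemma digSegNE_extend_down {p q : ℤ × ℤ} (h1 : p.1 ≤ q.1) (h2 : p.2 ≤ q.2) :
    ∃ r : ℤ × ℤ, r.1 + r.2 = p.1 + p.2 - 1 ∧ r.1 ≤ p.1 ∧ r.2 ≤ p.2 ∧
      p ∈ digSegNE prec r q := by
  by_cases h : upAt prec (p.1, p.2 - 1) q (p.1 + p.2 - 1)
  · refine ⟨(p.1, p.2 - 1), by show p.1 + (p.2 - 1) = p.1 + p.2 - 1; ring,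
      le_refl _, by show p.2 - 1 ≤ p.2; omega, ?_⟩
    refine (mem_digSegNE prec).2 ⟨by show p.1 + (p.2 - 1) ≤ p.1 + p.2; omega, by omega, ?_⟩
    show p.2 = p.2 - 1 + (((Finset.Ico (p.1 + (p.2 - 1)) (p.1 + p.2)).filter
      (fun t => upAt prec (p.1, p.2 - 1) q t)).card : ℤ)
    have hset : Finset.Ico (p.1 + (p.2 - 1)) (p.1 + p.2) = {p.1 + p.2 - 1} := by
      ext x
      simp only [Finset.mem_Ico, Finset.mem_singleton]
      omega
    rw [hset, Finset.filter_singleton]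
    simp only [h, if_true, Finset.card_singleton]
    omega
  · refine ⟨(p.1 - 1, p.2), by show p.1 - 1 + p.2 = p.1 + p.2 - 1; ring,
      by show p.1 - 1 ≤ p.1; omega, le_refl _, ?_⟩
    have h' : ¬ upAt prec (p.1 - 1, p.2) q (p.1 + p.2 - 1) := by
      intro hc
      apply h
      show (((Finset.Ico (p.1 + (p.2 - 1)) (q.1 + q.2)).filter
        (fun u => u = (p.1 + p.2 - 1) ∨ prec (p.1 + p.2 - 1) u)).card : ℤ) ≤ q.2 - (p.2 - 1)
      have hc' : (((Finset.Ico (p.1 - 1 + p.2) (q.1 + q.2)).filter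
          (fun u => u = (p.1 + p.2 - 1) ∨ prec (p.1 + p.2 - 1) u)).card : ℤ) ≤ q.2 - p.2 := hc
      rw [show p.1 + (p.2 - 1) = p.1 - 1 + p.2 by ring]
      omega
    refine (mem_digSegNE prec).2 ⟨by show p.1 - 1 + p.2 ≤ p.1 + p.2; omega, by omega, ?_⟩
    show p.2 = p.2 + (((Finset.Ico (p.1 - 1 + p.2) (p.1 + p.2)).filter
      (fun t => upAt prec (p.1 - 1, p.2) q t)).card : ℤ)
    have hset : Finset.Ico (p.1 - 1 + p.2) (p.1 + p.2) = {p.1 + p.2 - 1} := by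
      ext x
      simp only [Finset.mem_Ico, Finset.mem_singleton]
      omega
    rw [hset, Finset.filter_singleton]
    simp only [h', if_false, Finset.card_empty]
    omega

lemma GridAdj.symm {x y : ℤ × ℤ} (h : GridAdj x y) : GridAdj y x := by
  unfold GridAdj at h ⊢
  rcases h with ⟨h1, h2⟩ | ⟨h1, h2⟩
  · exact Or.inl ⟨by rw [abs_sub_comm]; exact h1, h2.symm⟩
  · exact Or.inr ⟨h1.symm, by rw [abs_sub_comm]; exact h2⟩

lemma IsGridPath.symm {p q : ℤ × ℤ} {S : Set (ℤ × ℤ)} (h : IsGridPath p q S) :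
    IsGridPath q p S := by
  obtain ⟨n, f, h0, hl, hinj, hadj, hrange⟩ := h
  refine ⟨n, f ∘ Fin.rev, ?_, ?_, hinj.comp Fin.rev_injective, ?_, ?_⟩
  · show f (Fin.rev 0) = q
    rw [Fin.rev_zero, hl]
  · show f (Fin.rev (Fin.last n)) = p
    rw [Fin.rev_last, h0]
  · intro i
    show GridAdj (f (Fin.rev i.castSucc)) (f (Fin.rev i.succ))
    rw [Fin.rev_castSucc, Fin.rev_succ]
    exact (hadj (Fin.rev i)).symm
  · show Set.range (f ∘ Fin.rev) = S
    rw [Set.range_comp, Fin.rev_surjective.range_eq, Set.image_univ, hrange]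

lemma IsGridPath.reflect {p q : ℤ × ℤ} {S : Set (ℤ × ℤ)} (h : IsGridPath p q S) :
    IsGridPath (refl2 p) (refl2 q) (refl2 '' S) := by
  obtain ⟨n, f, h0, hl, hinj, hadj, hrange⟩ := h
  refine ⟨n, refl2 ∘ f, ?_, ?_, refl2_injective.comp hinj, ?_, ?_⟩
  · show refl2 (f 0) = refl2 p
    rw [h0]
  · show refl2 (f (Fin.last n)) = refl2 q
    rw [hl]
  · intro i
    have hh := hadj i
    unfold GridAdj at hh ⊢
    rcases hh with ⟨h1, h2⟩ | ⟨h1, h2⟩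
    · refine Or.inl ⟨?_, ?_⟩
      · show |(-(f i.succ).1) - (-(f i.castSucc).1)| = 1
        rw [show (-(f i.succ).1) - (-(f i.castSucc).1)
            = -((f i.succ).1 - (f i.castSucc).1) by ring, abs_neg]
        exact h1
      · show (f i.succ).2 = (f i.castSucc).2
        exact h2
    · refine Or.inr ⟨?_, ?_⟩
      · show -(f i.succ).1 = -(f i.castSucc).1
        rw [h1]
      · show |(f i.succ).2 - (f i.castSucc).2| = 1
        exact h2
  · show Set.range (refl2 ∘ f) = refl2 '' S
    rw [Set.range_comp, hrange]

open Classical in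
lemma isGridPath_digSegNE {p q : ℤ × ℤ} (h1 : p.1 ≤ q.1) (h2 : p.2 ≤ q.2) :
    IsGridPath p q (digSegNE prec p q) := by
  set a := p.1 + p.2 with ha
  set b := q.1 + q.2 with hb
  set g : ℤ → ℤ :=
    fun s => p.2 + (((Finset.Ico a s).filter (fun t => upAt prec p q t)).card : ℤ) with hg
  have hga : g a = p.2 := by
    simp [hg, Finset.Ico_self]
  have hgb : g b = q.2 := by
    have htot := card_filter_upAt prec h1 h2
    rw [← ha, ← hb] at htot
    simp only [hg]
    omega
  have hstep : ∀ s : ℤ, a ≤ s → g (s + 1) = g s ∨ g (s + 1) = g s + 1 := by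
    intro s hs
    have hadd := card_filter_Ico_succ (fun t => upAt prec p q t) (a := a) (s := s) hs
    rcases Classical.em (upAt prec p q s) with hcase | hcase
    · right
      simp only [hcase, if_true] at hadd
      simp only [hg]
      omega
    · left
      simp only [hcase, if_false] at hadd
      simp only [hg]
      omega
  have hab : a ≤ b := by omega
  refine ⟨(b - a).toNat,
    fun i => (a + (i.val : ℤ) - g (a + (i.val : ℤ)), g (a + (i.val : ℤ))), ?_, ?_, ?_, ?_, ?_⟩
  · simp only [Fin.val_zero, Nat.cast_zero, add_zero, hga]
    exact prod_eq (by show a - p.2 = p.1; omega) rfl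
  · simp only [Fin.val_last]
    rw [show a + (((b - a).toNat : ℕ) : ℤ) = b from by omega, hgb]
    exact prod_eq (by show b - q.2 = q.1; omega) rfl
  · intro i j hij
    simp only [Prod.mk.injEq] at hij
    obtain ⟨e1, e2⟩ := hij
    have : (i.val : ℤ) = (j.val : ℤ) := by omega
    exact Fin.val_injective (by exact_mod_cast this)
  · intro i
    simp only [Fin.coe_castSucc, Fin.val_succ, Nat.cast_add, Nat.cast_one]
    rw [show a + ((i.val : ℤ) + 1) = a + (i.val : ℤ) + 1 by ring]
    have hcase := hstep (a + (i.val : ℤ)) (by omega)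
    set s := a + (i.val : ℤ) with hsdef
    rcases hcase with hcase | hcase
    · have e1 : |(s + 1 - g (s + 1)) - (s - g s)| = 1 := by
        rw [hcase, show s + 1 - g s - (s - g s) = (1 : ℤ) by ring]
        exact abs_one
      exact Or.inl ⟨e1, hcase⟩
    · have e1 : s + 1 - g (s + 1) = s - g s := by
        rw [hcase]; ring
      have e2 : |g (s + 1) - g s| = 1 := by
        rw [hcase, show g s + 1 - g s = (1 : ℤ) by ring]
        exact abs_one
      exact Or.inr ⟨e1, e2⟩
  · ext r
    constructor
    · rintro ⟨i, rfl⟩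
      have hi : (i.val : ℤ) ≤ b - a := by
        have := i.isLt
        omega
      refine (mem_digSegNE prec).2 ⟨?_, ?_, ?_⟩
      · show p.1 + p.2 ≤ a + (i.val : ℤ) - g (a + (i.val : ℤ)) + g (a + (i.val : ℤ))
        omega
      · show a + (i.val : ℤ) - g (a + (i.val : ℤ)) + g (a + (i.val : ℤ)) ≤ q.1 + q.2
        omega
      · show g (a + (i.val : ℤ)) = p.2 + (((Finset.Ico (p.1 + p.2)
            (a + (i.val : ℤ) - g (a + (i.val : ℤ)) + g (a + (i.val : ℤ)))).filter
            (fun t => upAt prec p q t)).card : ℤ)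
        rw [show a + (i.val : ℤ) - g (a + (i.val : ℤ)) + g (a + (i.val : ℤ))
            = a + (i.val : ℤ) by ring, ← ha]
    · intro hr
      obtain ⟨hr1, hr2, hr3⟩ := (mem_digSegNE prec).1 hr
      rw [← ha] at hr1 hr3
      rw [← hb] at hr2
      refine ⟨⟨(r.1 + r.2 - a).toNat, by omega⟩, ?_⟩
      show (a + (((r.1 + r.2 - a).toNat : ℕ) : ℤ) - g (a + (((r.1 + r.2 - a).toNat : ℕ) : ℤ)),
        g (a + (((r.1 + r.2 - a).toNat : ℕ) : ℤ))) = r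
      rw [show (((r.1 + r.2 - a).toNat : ℕ) : ℤ) = r.1 + r.2 - a from by omega,
        show a + (r.1 + r.2 - a) = r.1 + r.2 by ring]
      have hgr : g (r.1 + r.2) = r.2 := by
        simp only [hg]
        omega
      rw [hgr]
      exact prod_eq (by show r.1 + r.2 - r.2 = r.1; ring) rfl

lemma digSeg_NE {p q : ℤ × ℤ} (h1 : p.1 ≤ q.1) (h2 : p.2 ≤ q.2) :
    digSeg prec p q = digSegNE prec p q := by
  unfold digSeg digSegAux
  rw [if_pos h1, if_pos h2]

lemma digSeg_SE' {p q : ℤ × ℤ} (h1 : p.1 ≤ q.1) (h2 : q.2 ≤ p.2) :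
    digSeg prec p q = refl2 '' digSegNE prec (refl2 q) (refl2 p) := by
  rcases eq_or_lt_of_le h2 with he | hlt
  · rw [digSeg_NE prec h1 he.ge, digSegNE_horiz prec h1 he.symm,
      digSegNE_horiz prec (p := refl2 q) (q := refl2 p)
        (by simp only [refl2_fst]; omega) (by simp only [refl2_snd]; omega)]
    ext r
    rw [mem_refl2_image]
    simp only [Set.mem_setOf_eq, refl2_fst, refl2_snd]
    omega
  · unfold digSeg digSegAux
    rw [if_pos h1, if_neg (by omega)]
    rfl

lemma digSeg_symm (p q : ℤ × ℤ) : digSeg prec p q = digSeg prec q p := by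
  rcases lt_trichotomy p.1 q.1 with h | h | h
  · unfold digSeg
    rw [if_pos h.le, if_neg (by omega)]
  · rcases lt_trichotomy p.2 q.2 with h2 | h2 | h2
    · rw [digSeg_NE prec h.le h2.le, digSeg_SE' prec (p := q) (q := p) h.ge h2.le,
        digSegNE_vert prec h h2.le,
        digSegNE_vert prec (p := refl2 p) (q := refl2 q)
          (by simp only [refl2_fst]; omega) (by simp only [refl2_snd]; omega)]
      ext r
      rw [mem_refl2_image]
      simp only [Set.mem_setOf_eq, refl2_fst, refl2_snd]
      omega
    · rw [prod_eq h h2]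
    · rw [digSeg_SE' prec h.le h2.le, digSeg_NE prec (p := q) (q := p) h.ge h2.le,
        digSegNE_vert prec (p := refl2 q) (q := refl2 p)
          (by simp only [refl2_fst]; omega) (by simp only [refl2_snd]; omega),
        digSegNE_vert prec (p := q) (q := p) h.symm h2.le]
      ext r
      rw [mem_refl2_image]
      simp only [Set.mem_setOf_eq, refl2_fst, refl2_snd]
      omega
  · unfold digSeg
    rw [if_neg (by omega), if_pos h.le]

lemma digSeg_reflect_of_le {p q : ℤ × ℤ} (hx : p.1 ≤ q.1) :
    digSeg prec p q = refl2 '' digSeg prec (refl2 p) (refl2 q) := by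
  rw [digSeg_symm prec (refl2 p) (refl2 q)]
  rcases le_total p.2 q.2 with hy | hy
  · rw [digSeg_NE prec hx hy,
      digSeg_SE' prec (p := refl2 q) (q := refl2 p)
        (by simp only [refl2_fst]; omega) (by simp only [refl2_snd]; omega),
      refl2_refl2, refl2_refl2, refl2_image_image]
  · rw [digSeg_SE' prec hx hy,
      digSeg_NE prec (p := refl2 q) (q := refl2 p)
        (by simp only [refl2_fst]; omega) (by simp only [refl2_snd]; omega)]

lemma digSeg_reflect (p q : ℤ × ℤ) :
    digSeg prec p q = refl2 '' digSeg prec (refl2 p) (refl2 q) := by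
  rcases le_total p.1 q.1 with hx | hx
  · exact digSeg_reflect_of_le prec hx
  · have h := digSeg_reflect_of_le prec (p := refl2 p) (q := refl2 q)
      (by simp only [refl2_fst]; omega)
    rw [refl2_refl2, refl2_refl2] at h
    rw [h, refl2_image_image]

lemma digSeg_path_of_le {p q : ℤ × ℤ} (hx : p.1 ≤ q.1) :
    IsGridPath p q (digSeg prec p q) := by
  rcases le_total p.2 q.2 with hy | hy
  · rw [digSeg_NE prec hx hy]
    exact isGridPath_digSegNE prec hx hy
  · rw [digSeg_SE' prec hx hy]
    have h := isGridPath_digSegNE prec (p := refl2 q) (q := refl2 p)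
      (by simp only [refl2_fst]; omega) (by simp only [refl2_snd]; omega)
    have h2 := h.reflect
    rw [refl2_refl2, refl2_refl2] at h2
    exact h2.symm

lemma digSeg_subseg_of_le {p q r : ℤ × ℤ} (hx : p.1 ≤ q.1) (hr : r ∈ digSeg prec p q) :
    digSeg prec p r ⊆ digSeg prec p q := by
  rcases le_total p.2 q.2 with hy | hy
  · rw [digSeg_NE prec hx hy] at hr ⊢
    obtain ⟨hb1, hb2, hb3, hb4⟩ := digSegNE_between prec hx hy hr
    rw [digSeg_NE prec hb1 hb3]
    exact digSegNE_subseg_left prec hx hy hr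
  · rw [digSeg_SE' prec hx hy] at hr ⊢
    rw [mem_refl2_image] at hr
    have hq1 : (refl2 q).1 ≤ (refl2 p).1 := by simp only [refl2_fst]; omega
    have hq2 : (refl2 q).2 ≤ (refl2 p).2 := by simp only [refl2_snd]; omega
    obtain ⟨hb1, hb2, hb3, hb4⟩ := digSegNE_between prec hq1 hq2 hr
    simp only [refl2_fst, refl2_snd] at hb1 hb2 hb3 hb4
    have hpr1 : p.1 ≤ r.1 := by omega
    have hpr2 : r.2 ≤ p.2 := by omega
    rw [digSeg_SE' prec hpr1 hpr2]
    apply Set.image_mono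
    exact digSegNE_subseg_right prec hq1 hq2 hr

lemma digSeg_prolong_of_le {p q : ℤ × ℤ} (hx : p.1 ≤ q.1) :
    ∃ r, r ∉ digSeg prec p q ∧ digSeg prec p q ⊆ digSeg prec p r := by
  rcases le_total p.2 q.2 with hy | hy
  · obtain ⟨r, hsum, hr1, hr2, hmem⟩ := digSegNE_extend prec hx hy
    refine ⟨r, ?_, ?_⟩
    · rw [digSeg_NE prec hx hy]
      intro hc
      obtain ⟨_, hc2, _⟩ := (mem_digSegNE prec).1 hc
      omega
    · rw [digSeg_NE prec hx hy, digSeg_NE prec (le_trans hx hr1) (le_trans hy hr2)]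
      exact digSegNE_subseg_left prec (le_trans hx hr1) (le_trans hy hr2) hmem
  · obtain ⟨r', hsum, hr1, hr2, hmem⟩ := digSegNE_extend_down prec (p := refl2 q) (q := refl2 p)
      (by simp only [refl2_fst]; omega) (by simp only [refl2_snd]; omega)
    simp only [refl2_fst, refl2_snd] at hsum hr1 hr2
    refine ⟨refl2 r', ?_, ?_⟩
    · rw [digSeg_SE' prec hx hy, mem_refl2_image, refl2_refl2]
      intro hc
      obtain ⟨hc1, _, _⟩ := (mem_digSegNE prec).1 hc
      simp only [refl2_fst, refl2_snd] at hc1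
      omega
    · have hpr1 : p.1 ≤ (refl2 r').1 := by simp only [refl2_fst]; omega
      have hpr2 : (refl2 r').2 ≤ p.2 := by simp only [refl2_snd]; omega
      rw [digSeg_SE' prec hx hy, digSeg_SE' prec hpr1 hpr2, refl2_refl2]
      apply Set.image_mono
      exact digSegNE_subseg_right prec
        (by simp only [refl2_fst]; omega) (by simp only [refl2_snd]; omega) hmem

end CDSDev


theorem digSeg_isCDS (prec : ℤ → ℤ → Prop) [IsStrictTotalOrder ℤ prec] :
    IsCDS (digSeg prec) := by
  refine ⟨?_, ?_, ?_, ?_, ?_, ?_⟩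
  · -- path
    intro p q
    rcases le_total p.1 q.1 with hx | hx
    · exact digSeg_path_of_le prec hx
    · rw [digSeg_symm prec p q]
      exact (digSeg_path_of_le prec hx).symm
  · -- symm
    exact digSeg_symm prec
  · -- subseg
    intro p q r hr
    rcases le_total p.1 q.1 with hx | hx
    · exact digSeg_subseg_of_le prec hx hr
    · have hrr : refl2 r ∈ digSeg prec (refl2 p) (refl2 q) := by
        rw [digSeg_reflect prec p q, mem_refl2_image] at hr
        exact hr
      have hsub := digSeg_subseg_of_le prec (p := refl2 p) (q := refl2 q) (r := refl2 r)
        (by simp only [refl2_fst]; omega) hrr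
      rw [digSeg_reflect prec p q, digSeg_reflect prec p r]
      intro x hx'
      rw [mem_refl2_image] at hx' ⊢
      exact hsub hx'
  · -- prolong
    intro p q
    rcases le_total p.1 q.1 with hx | hx
    · exact digSeg_prolong_of_le prec hx
    · obtain ⟨r', hr1, hr2⟩ := digSeg_prolong_of_le prec (p := refl2 p) (q := refl2 q)
        (by simp only [refl2_fst]; omega)
      refine ⟨refl2 r', ?_, ?_⟩
      · rw [digSeg_reflect prec p q, mem_refl2_image, refl2_refl2]
        exact hr1
      · rw [digSeg_reflect prec p q, digSeg_reflect prec p (refl2 r'), refl2_refl2]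
        exact Set.image_mono hr2
  · -- monoV
    intro p q h r hr
    rcases le_total p.2 q.2 with hy | hy
    · rw [digSeg_NE prec h.le hy, digSegNE_vert prec h hy] at hr
      exact hr.1
    · rw [digSeg_SE' prec h.le hy, mem_refl2_image,
        digSegNE_vert prec (p := refl2 q) (q := refl2 p)
          (by simp only [refl2_fst]; omega) (by simp only [refl2_snd]; omega)] at hr
      obtain ⟨h1', _, _⟩ := hr
      simp only [refl2_fst] at h1'
      omega
  · -- monoH
    intro p q h r hr
    rcases le_total p.1 q.1 with hx | hx
    · rw [digSeg_NE prec hx h.le, digSegNE_horiz prec hx h] at hr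
      exact hr.1
    · rw [digSeg_symm prec p q, digSeg_NE prec hx h.ge,
        digSegNE_horiz prec hx h.symm] at hr
      rw [hr.1]
      exact h.symm
end

section
/- Let p,q,r,r' ∈ ℤ² satisfy p_x ≤ r_x ≤ q_x, p_y ≤ r_y < q_y, r' = (r_x, r_y+1), and suppose r_x − p_x = q_x − r'_x + ε and r_y − p_y = q_y − r'_y − ε for some ε ∈ {−1,0,1}. Then H(\overline{pq}, \overline{pr} ∪ \overline{rr'} ∪ \overline{r'q}) ≤ √5/2. -/
section HausdorffAux
variable {E : Type*} [NormedAddCommGroup E] [NormedSpace ℝ E]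

lemma hausdorff_split_aux (P Q R R' : E) (c : ℝ) (hc : 0 ≤ c)
    (hR : ‖R - (1/2:ℝ) • (P + Q)‖ ≤ c) (hR' : ‖R' - (1/2:ℝ) • (P + Q)‖ ≤ c) :
    Metric.hausdorffDist (segment ℝ P Q)
      (segment ℝ P R ∪ segment ℝ R R' ∪ segment ℝ R' Q) ≤ c := by
  set M : E := (1/2:ℝ) • (P + Q) with hM
  have hMmem : M ∈ segment ℝ P Q := by
    rw [hM]
    have := midpoint_mem_segment (𝕜 := ℝ) P Q
    rwa [midpoint_eq_smul_add, invOf_eq_inv, show ((2:ℝ)⁻¹) = 1/2 by norm_num] at this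
  apply Metric.hausdorffDist_le_of_mem_dist hc
  · intro x hx
    rw [segment_eq_image'] at hx
    obtain ⟨t, ⟨ht0, ht1⟩, rfl⟩ := hx
    by_cases h : t ≤ 1/2
    · refine ⟨P + (2*t) • (R - P), Or.inl (Or.inl ?_), ?_⟩
      · rw [segment_eq_image']; exact ⟨2*t, ⟨by linarith, by linarith⟩, rfl⟩
      · have key : (P + t • (Q - P)) - (P + (2*t) • (R - P)) = (2*t) • (M - R) := by
          rw [hM]; module
        rw [dist_eq_norm, key, norm_smul]
        have h1 : ‖M - R‖ ≤ c := by rwa [norm_sub_rev]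
        have h2 : |2*t| ≤ 1 := by rw [abs_of_nonneg (by linarith)]; linarith
        calc |2*t| * ‖M - R‖ ≤ 1 * c :=
              mul_le_mul h2 h1 (norm_nonneg _) zero_le_one
          _ = c := one_mul c
    · refine ⟨R' + (2*t-1) • (Q - R'), Or.inr ?_, ?_⟩
      · rw [segment_eq_image']; exact ⟨2*t-1, ⟨by linarith, by linarith⟩, rfl⟩
      · have key : (P + t • (Q - P)) - (R' + (2*t-1) • (Q - R')) = (2-2*t) • (M - R') := by
          rw [hM]; module
        rw [dist_eq_norm, key, norm_smul]
        have h1 : ‖M - R'‖ ≤ c := by rwa [norm_sub_rev]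
        have h2 : |2-2*t| ≤ 1 := by rw [abs_of_nonneg (by linarith)]; linarith
        calc |2-2*t| * ‖M - R'‖ ≤ 1 * c :=
              mul_le_mul h2 h1 (norm_nonneg _) zero_le_one
          _ = c := one_mul c
  · intro x hx
    rcases hx with (hx | hx) | hx
    · rw [segment_eq_image'] at hx
      obtain ⟨s, ⟨hs0, hs1⟩, rfl⟩ := hx
      refine ⟨P + (s/2) • (Q - P), ?_, ?_⟩
      · rw [segment_eq_image']; exact ⟨s/2, ⟨by linarith, by linarith⟩, rfl⟩
      · have key : (P + s • (R - P)) - (P + (s/2) • (Q - P)) = s • (R - M) := by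
          rw [hM]; module
        rw [dist_eq_norm, key, norm_smul]
        have h2 : |s| ≤ 1 := by rw [abs_of_nonneg hs0]; linarith
        calc |s| * ‖R - M‖ ≤ 1 * c :=
              mul_le_mul h2 hR (norm_nonneg _) zero_le_one
          _ = c := one_mul c
    · rw [segment_eq_image'] at hx
      obtain ⟨s, ⟨hs0, hs1⟩, rfl⟩ := hx
      refine ⟨M, hMmem, ?_⟩
      have key : (R + s • (R' - R)) - M = (1-s) • (R - M) + s • (R' - M) := by module
      rw [dist_eq_norm, key]
      calc ‖(1-s) • (R - M) + s • (R' - M)‖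
          ≤ ‖(1-s) • (R - M)‖ + ‖s • (R' - M)‖ := norm_add_le _ _
        _ = (1-s) * ‖R - M‖ + s * ‖R' - M‖ := by
              rw [norm_smul, norm_smul, Real.norm_eq_abs, Real.norm_eq_abs,
                abs_of_nonneg (by linarith : (0:ℝ) ≤ 1-s), abs_of_nonneg hs0]
        _ ≤ c := by nlinarith [norm_nonneg (R - M), norm_nonneg (R' - M)]
    · rw [segment_eq_image'] at hx
      obtain ⟨s, ⟨hs0, hs1⟩, rfl⟩ := hx
      refine ⟨P + ((s+1)/2) • (Q - P), ?_, ?_⟩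
      · rw [segment_eq_image']; exact ⟨(s+1)/2, ⟨by linarith, by linarith⟩, rfl⟩
      · have key : (R' + s • (Q - R')) - (P + ((s+1)/2) • (Q - P)) = (1-s) • (R' - M) := by
          rw [hM]; module
        rw [dist_eq_norm, key, norm_smul]
        have h2 : |1-s| ≤ 1 := by rw [abs_of_nonneg (by linarith)]; linarith
        calc |1-s| * ‖R' - M‖ ≤ 1 * c :=
              mul_le_mul h2 hR' (norm_nonneg _) zero_le_one
          _ = c := one_mul c

end HausdorffAux

lemma norm_bound_aux (p q r : ℤ × ℤ) (a b : ℝ)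
    (ha : (r.1:ℝ) - ((p.1:ℝ) + q.1)/2 = a) (hb : (r.2:ℝ) - ((p.2:ℝ) + q.2)/2 = b)
    (hab : a^2 + b^2 ≤ 5/4) :
    ‖toR2 r - (1/2:ℝ) • (toR2 p + toR2 q)‖ ≤ Real.sqrt 5 / 2 := by
  have hn : ‖toR2 r - (1/2:ℝ) • (toR2 p + toR2 q)‖ = Real.sqrt (a^2 + b^2) := by
    rw [EuclideanSpace.norm_eq, Fin.sum_univ_two]
    simp only [toR2, PiLp.sub_apply, PiLp.smul_apply, PiLp.add_apply,
      Matrix.cons_val_zero, Matrix.cons_val_one, Matrix.head_cons, smul_eq_mul,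
      Real.norm_eq_abs, sq_abs]
    rw [← ha, ← hb]; ring_nf
  rw [hn]
  have h5 : Real.sqrt 5 / 2 = Real.sqrt (5/4) := by
    rw [Real.sqrt_div (by norm_num : (0:ℝ) ≤ 5) 4,
      show (4:ℝ) = 2^2 by norm_num, Real.sqrt_sq (by norm_num : (0:ℝ) ≤ 2)]
  rw [h5]
  exact Real.sqrt_le_sqrt hab

theorem hausdorff_midpoint_split (p q r r' : ℤ × ℤ) (ε : ℤ)
    (hε : ε = -1 ∨ ε = 0 ∨ ε = 1)
    (h1 : p.1 ≤ r.1) (h2 : r.1 ≤ q.1) (h3 : p.2 ≤ r.2) (h4 : r.2 < q.2)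
    (hr' : r' = (r.1, r.2 + 1))
    (hx : r.1 - p.1 = q.1 - r'.1 + ε) (hy : r.2 - p.2 = q.2 - r'.2 - ε) :
    Metric.hausdorffDist (segment ℝ (toR2 p) (toR2 q))
      (segment ℝ (toR2 p) (toR2 r) ∪ segment ℝ (toR2 r) (toR2 r') ∪
        segment ℝ (toR2 r') (toR2 q)) ≤ Real.sqrt 5 / 2 := by
  subst hr'
  dsimp only at hx hy
  have hx' : 2*r.1 - p.1 - q.1 = ε := by omega
  have hy' : 2*r.2 - p.2 - q.2 = -1-ε := by omega
  have hxR : ((2*r.1 - p.1 - q.1 : ℤ) : ℝ) = (ε:ℝ) := by rw [hx']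
  have hyR : ((2*r.2 - p.2 - q.2 : ℤ) : ℝ) = -1-(ε:ℝ) := by
    rw [hy']; push_cast; ring
  push_cast at hxR hyR
  apply hausdorff_split_aux _ _ _ _ _ (by positivity)
  · apply norm_bound_aux p q r ((ε:ℝ)/2) ((-1-(ε:ℝ))/2) (by linarith) (by linarith)
    rcases hε with rfl | rfl | rfl <;> norm_num
  · apply norm_bound_aux p q (r.1, r.2+1) ((ε:ℝ)/2) ((1-(ε:ℝ))/2) ?_ ?_ ?_
    · dsimp only; linarith
    · dsimp only; push_cast; linarith
    · rcases hε with rfl | rfl | rfl <;> norm_num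
end

section
/- The relation ≺ on ℤ defined via 2-adic valuations is a strict total order: it is irreflexive, transitive, and for all a,b ∈ ℤ with a ≠ b, exactly one of a ≺ b or b ≺ a holds. -/
lemma v2_exists_gt (a b : ℤ) (h : a ≠ b) : ∃ i : ℕ, v2 (b - i) < v2 (a - i) := by
  have hab : a - b ≠ 0 := sub_ne_zero.mpr h
  set k := padicValInt 2 (a - b) with hk
  have hpos : (0:ℤ) < 2 ^ (k + 1) := by positivity
  set i : ℕ := (a % 2 ^ (k + 1)).toNat with hi
  have hmod : (i : ℤ) = a % 2 ^ (k + 1) :=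
    Int.toNat_of_nonneg (Int.emod_nonneg a (ne_of_gt hpos))
  have hdvd : ((2 : ℕ) : ℤ) ^ (k + 1) ∣ a - i := by
    rw [hmod]; exact Int.dvd_self_sub_of_emod_eq rfl
  have hkdvd : ((2 : ℕ) : ℤ) ^ k ∣ a - b := padicValInt_dvd (p := 2) (a - b)
  have hknot : ¬ ((2 : ℕ) : ℤ) ^ (k + 1) ∣ a - b := by
    rw [padicValInt_dvd_iff]
    push_neg
    exact ⟨hab, by omega⟩
  have hdvdk : ((2 : ℕ) : ℤ) ^ k ∣ a - i := dvd_trans (pow_dvd_pow 2 (Nat.le_succ k)) hdvd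
  have hbidvd : ((2 : ℕ) : ℤ) ^ k ∣ b - i := by
    have : b - i = (a - i) - (a - b) := by ring
    rw [this]; exact dvd_sub hdvdk hkdvd
  have hbinot : ¬ ((2 : ℕ) : ℤ) ^ (k + 1) ∣ b - i := by
    intro hcon
    apply hknot
    have : a - b = (a - i) - (b - i) := by ring
    rw [this]; exact dvd_sub hdvd hcon
  have hbi0 : b - (i : ℤ) ≠ 0 := by
    intro h0; exact hbinot (h0 ▸ dvd_zero _)
  have hvb : padicValInt 2 (b - i) = k := by
    have h1 : k ≤ padicValInt 2 (b - i) := by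
      have := (padicValInt_dvd_iff (p := 2) k (b - i)).mp hbidvd
      tauto
    have h2 : ¬ (k + 1 ≤ padicValInt 2 (b - i)) := by
      intro hle
      exact hbinot ((padicValInt_dvd_iff (p := 2) (k+1) (b - i)).mpr (Or.inr hle))
    omega
  refine ⟨i, ?_⟩
  have hvbv : v2 (b - i) = (k : ℕ∞) := by rw [v2, if_neg hbi0, hvb]
  rw [hvbv]
  by_cases ha0 : a - (i : ℤ) = 0
  · rw [v2, if_pos ha0]
    exact WithTop.coe_lt_top k
  · rw [v2, if_neg ha0]
    have : k + 1 ≤ padicValInt 2 (a - i) := by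
      have := (padicValInt_dvd_iff (p := 2) (k+1) (a - i)).mp hdvd
      tauto
    exact_mod_cast Nat.lt_of_lt_of_le (Nat.lt_succ_self k) this

lemma vorder_asymm (a b : ℤ) (hab : vorder a b) (hba : vorder b a) : False := by
  obtain ⟨i, hi, hji⟩ := hab
  obtain ⟨i', hi', hji'⟩ := hba
  rcases lt_trichotomy i i' with h | h | h
  · exact absurd (hji' i h).symm (ne_of_lt hi)
  · subst h; exact lt_asymm hi hi'
  · exact absurd (hji i' h).symm (ne_of_lt hi')

theorem vorder_isStrictTotalOrder :
    (∀ a : ℤ, ¬ vorder a a) ∧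
    (∀ a b c : ℤ, vorder a b → vorder b c → vorder a c) ∧
    (∀ a b : ℤ, a ≠ b → Xor' (vorder a b) (vorder b a)) := by
  refine ⟨?_, ?_, ?_⟩
  · rintro a ⟨i, hi, -⟩
    exact lt_irrefl _ hi
  · rintro a b c ⟨i, hi, hji⟩ ⟨i', hi', hji'⟩
    rcases lt_trichotomy i i' with h | h | h
    · exact ⟨i, hi.trans_eq (hji' i h), fun j hj => (hji j hj).trans (hji' j (hj.trans h))⟩
    · subst h
      exact ⟨i, hi.trans hi', fun j hj => (hji j hj).trans (hji' j hj)⟩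
    · exact ⟨i', (hji i' h).symm ▸ hi', fun j hj => (hji j (hj.trans h)).trans (hji' j hj)⟩
  · intro a b hne
    classical
    have hex : ∃ n : ℕ, v2 (a - n) ≠ v2 (b - n) := by
      obtain ⟨i, hi⟩ := v2_exists_gt a b hne
      exact ⟨i, (ne_of_lt hi).symm⟩
    set n := Nat.find hex with hn
    have hne' : v2 (a - n) ≠ v2 (b - n) := Nat.find_spec hex
    have hmin : ∀ j : ℕ, j < n → v2 (a - j) = v2 (b - j) := fun j hj =>
      not_not.mp (Nat.find_min hex hj)
    rcases lt_or_gt_of_ne hne' with h | h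
    · exact Or.inl ⟨⟨n, h, hmin⟩, fun hba => vorder_asymm a b ⟨n, h, hmin⟩ hba⟩
    · exact Or.inr ⟨⟨n, h, fun j hj => (hmin j hj).symm⟩,
        fun hab => vorder_asymm a b hab ⟨n, h, fun j hj => (hmin j hj).symm⟩⟩
end

section
/- Let k ≥ 0 and let A,B ∈ ℤ with B − A = 2^{k+1} − 1, and set M = (A+B−1)/2. Suppose v₂(M) ≥ k and v₂(x) < k for every x with A ≤ x < B and x ≠ M. Let x_1 ≺ x_2 ≺ … ≺ x_{2^{k+1}−1} be the elements of {x ∈ ℤ : A ≤ x < B} listed in increasing order with respect to ≺. Then for every index 1 ≤ i < 2^{k+1}−1: if x_i < M then x_{i+1} ≥ M, and if x_i > M then x_{i+1} ≤ M. -/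
lemma v2_le_iff (a : ℤ) (n : ℕ) : (n : ℕ∞) ≤ v2 a ↔ (2:ℤ)^n ∣ a := by
  unfold v2
  split
  · simp [*]
  · rename_i h
    rw [Nat.cast_le, show ((2:ℤ)^n) = ((2:ℕ):ℤ)^n by norm_num,
      padicValInt_dvd_iff]
    simp [h]

lemma v2_lt_iff (a : ℤ) (n : ℕ) : v2 a < (n : ℕ∞) ↔ ¬ (2:ℤ)^n ∣ a := by
  rw [← v2_le_iff, lt_iff_not_ge]

lemma v2_eq_iff (a : ℤ) (n : ℕ) : v2 a = (n : ℕ∞) ↔ ((2:ℤ)^n ∣ a ∧ ¬ (2:ℤ)^(n+1) ∣ a) := by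
  rw [← v2_le_iff, ← v2_lt_iff]
  constructor
  · intro h; constructor
    · exact le_of_eq h.symm
    · rw [h]; exact_mod_cast lt_add_one n
  · rintro ⟨h1, h2⟩
    have : v2 a < (n:ℕ∞) + 1 := by exact_mod_cast h2
    have h3 : v2 a ≤ (n : ℕ∞) := Order.le_of_lt_add_one this
    exact le_antisymm h3 h1

lemma v2_two_pow (n : ℕ) : v2 ((2:ℤ)^n) = n := by
  rw [v2_eq_iff]
  refine ⟨dvd_rfl, fun h => ?_⟩
  have := Int.le_of_dvd (by positivity) h
  have h2 : (2:ℤ)^n < 2^(n+1) := by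
    have : (2:ℤ)^n * 1 < 2^n * 2 := by
      have : (0:ℤ) < 2^n := by positivity
      omega
    simpa [pow_succ] using this
  omega

lemma v2_add_of_lt {a b : ℤ} (h : v2 a < v2 b) : v2 (a + b) = v2 a := by
  have ha : a ≠ 0 := by
    rintro rfl
    simp [v2] at h
  set m := padicValInt 2 a with hm
  have hva : v2 a = (m : ℕ∞) := by simp [v2, ha, hm]
  rw [hva] at h ⊢
  rw [v2_eq_iff] at hva ⊢
  obtain ⟨h1, h2⟩ := hva
  have hb : (2:ℤ)^(m+1) ∣ b := by
    rw [← v2_le_iff]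
    exact_mod_cast Order.add_one_le_of_lt h
  refine ⟨dvd_add h1 (dvd_trans (pow_dvd_pow 2 (by omega)) hb), fun hc => ?_⟩
  exact h2 (by simpa using dvd_sub hc hb)

lemma v2_add_of_gt {a b : ℤ} (h : v2 b < v2 a) : v2 (a + b) = v2 b := by
  rw [add_comm]; exact v2_add_of_lt h

lemma v2_add_pow_eq {k : ℕ} {a : ℤ} (h : v2 a < (k:ℕ∞)) : v2 (a + 2^k) = v2 a :=
  v2_add_of_lt (by rw [v2_two_pow]; exact h)

lemma v2_case1 {k : ℕ} {a : ℤ} (h : ((k:ℕ∞)+1) ≤ v2 a) : v2 (a + 2^k) = (k:ℕ∞) := by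
  rw [v2_add_of_gt, v2_two_pow]
  rw [v2_two_pow]
  exact lt_of_lt_of_le (by exact_mod_cast lt_add_one k) h

lemma v2_case2 {k : ℕ} {a : ℤ} (h : v2 a = (k:ℕ∞)) : ((k:ℕ∞)+1) ≤ v2 (a + 2^k) := by
  rw [v2_eq_iff] at h
  obtain ⟨⟨c, hc⟩, h2⟩ := h
  have hodd : ¬ (2:ℤ) ∣ c := by
    intro hd
    apply h2
    rw [hc, pow_succ]
    exact mul_dvd_mul_left _ hd
  have h2c : (2:ℤ) ∣ (c+1) := by omega
  obtain ⟨d, hd⟩ := h2c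
  have : a + 2^k = 2^(k+1) * d := by
    rw [hc, pow_succ]
    linear_combination (2^k:ℤ) * hd
  have : ((k+1:ℕ):ℕ∞) ≤ v2 (a + 2^k) := by
    rw [v2_le_iff, this]
    exact Dvd.intro _ rfl
  exact_mod_cast this

lemma keyA_pointwise {k : ℕ} {x y : ℤ} (h : ¬ (2:ℤ)^k ∣ (y - x)) (i : ℕ) :
    (v2 (x - i) < v2 (y - i) ↔ v2 (x + 2^k - i) < v2 (y - i)) ∧
    (v2 (y - i) < v2 (x - i) ↔ v2 (y - i) < v2 (x + 2^k - i)) ∧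
    (v2 (x - i) = v2 (y - i) ↔ v2 (x + 2^k - i) = v2 (y - i)) := by
  have hrw : x + 2^k - i = (x - i) + 2^k := by ring
  by_cases hk : v2 (x - i) < (k : ℕ∞)
  · rw [hrw, v2_add_pow_eq hk]
    exact ⟨Iff.rfl, Iff.rfl, Iff.rfl⟩
  · push_neg at hk
    have hdx : (2:ℤ)^k ∣ (x - i) := (v2_le_iff _ _).mp hk
    have hdy : ¬ (2:ℤ)^k ∣ (y - i) := by
      intro hd
      exact h (by simpa using dvd_sub hd hdx)
    have hky : v2 (y - i) < (k:ℕ∞) := (v2_lt_iff _ _).mpr hdy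
    have hk2 : (k:ℕ∞) ≤ v2 (x + 2^k - i) := by
      rw [v2_le_iff, hrw]
      exact dvd_add hdx dvd_rfl
    have l1 : v2 (y - i) < v2 (x - i) := lt_of_lt_of_le hky hk
    have l2 : v2 (y - i) < v2 (x + 2^k - i) := lt_of_lt_of_le hky hk2
    constructor
    · constructor
      · intro hc; exact absurd hc (not_lt.mpr l1.le)
      · intro hc; exact absurd hc (not_lt.mpr l2.le)
    constructor
    · exact ⟨fun _ => l2, fun _ => l1⟩
    · constructor
      · intro hc; exact absurd hc.symm (ne_of_lt l1)
      · intro hc; exact absurd hc (ne_of_gt l2)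

lemma keyA1 {k : ℕ} {x y : ℤ} (h : ¬ (2:ℤ)^k ∣ (y - x)) :
    vorder x y ↔ vorder (x + 2^k) y := by
  constructor
  · rintro ⟨i, h1, h2⟩
    exact ⟨i, ((keyA_pointwise h i).1).mp h1,
      fun j hj => ((keyA_pointwise h j).2.2).mp (h2 j hj)⟩
  · rintro ⟨i, h1, h2⟩
    exact ⟨i, ((keyA_pointwise h i).1).mpr h1,
      fun j hj => ((keyA_pointwise h j).2.2).mpr (h2 j hj)⟩

lemma keyA2 {k : ℕ} {x y : ℤ} (h : ¬ (2:ℤ)^k ∣ (y - x)) :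
    vorder y x ↔ vorder y (x + 2^k) := by
  constructor
  · rintro ⟨i, h1, h2⟩
    exact ⟨i, ((keyA_pointwise h i).2.1).mp h1,
      fun j hj => (((keyA_pointwise h j).2.2).mp (h2 j hj).symm).symm⟩
  · rintro ⟨i, h1, h2⟩
    exact ⟨i, ((keyA_pointwise h i).2.1).mpr h1,
      fun j hj => (((keyA_pointwise h j).2.2).mpr (h2 j hj).symm).symm⟩

lemma vorder_irrefl (x : ℤ) : ¬ vorder x x := by
  rintro ⟨i, h1, -⟩
  exact lt_irrefl _ h1

lemma vorder_asymm_s5 {x y : ℤ} (h1 : vorder x y) (h2 : vorder y x) : False := by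
  obtain ⟨i, hi1, hi2⟩ := h1
  obtain ⟨i', hi1', hi2'⟩ := h2
  rcases lt_trichotomy i i' with h|h|h
  · exact absurd (hi2' i h).symm (ne_of_lt hi1)
  · subst h; exact absurd hi1' (not_lt.mpr hi1.le)
  · exact absurd (hi2 i' h).symm (ne_of_lt hi1')

lemma vorder_total {x y : ℤ} (h : x ≠ y) : vorder x y ∨ vorder y x := by
  classical
  have hd : y - x ≠ 0 := fun hc => h (by omega)
  set m := padicValInt 2 (y - x) with hm
  have hvd : v2 (y - x) = (m : ℕ∞) := by simp [v2, hd, hm]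
  have hex : ∃ i : ℕ, v2 (x - i) ≠ v2 (y - i) := by
    refine ⟨(x % 2^(m+1)).toNat, ?_⟩
    have hnn : (0:ℤ) ≤ x % 2^(m+1) := Int.emod_nonneg x (by positivity)
    have hcast : ((x % 2^(m+1)).toNat : ℤ) = x % 2^(m+1) := Int.toNat_of_nonneg hnn
    rw [hcast]
    have hdvd : (2:ℤ)^(m+1) ∣ (x - x % 2^(m+1)) := Int.dvd_self_sub_of_emod_eq rfl
    have hvx : ((m:ℕ∞)+1) ≤ v2 (x - x % 2^(m+1)) := by
      have : ((m+1:ℕ):ℕ∞) ≤ v2 (x - x % 2^(m+1)) := (v2_le_iff _ _).mpr hdvd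
      exact_mod_cast this
    have hvy : v2 (y - x % 2^(m+1)) = (m : ℕ∞) := by
      have heq : y - x % 2^(m+1) = (x - x % 2^(m+1)) + (y - x) := by ring
      rw [heq, v2_add_of_gt, hvd]
      rw [hvd]
      exact lt_of_lt_of_le (by exact_mod_cast lt_add_one m) hvx
    rw [hvy]
    intro hc
    rw [hc] at hvx
    have : (m:ℕ∞) < (m:ℕ∞) + 1 := by exact_mod_cast lt_add_one m
    exact absurd hvx (not_le.mpr this)
  let i := Nat.find hex
  have hspec : v2 (x - i) ≠ v2 (y - i) := Nat.find_spec hex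
  have hmin : ∀ j, j < i → v2 (x - j) = v2 (y - j) := fun j hj => by
    by_contra hc
    exact absurd (Nat.find_le hc) (not_le.mpr hj)
  rcases lt_or_gt_of_ne hspec with hlt|hgt
  · exact Or.inl ⟨i, hlt, hmin⟩
  · exact Or.inr ⟨i, hgt, fun j hj => (hmin j hj).symm⟩

lemma keyC {k : ℕ} {A M u : ℤ} (hMv : M = A + 2^k - 1) (hdvd : (2:ℤ)^k ∣ (A - 1))
    (h1 : A ≤ u) (h2 : u < M) :
    ((2:ℤ)^(k+1) ∣ (A - 1) → vorder (u + 2^k) u) ∧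
    (¬ (2:ℤ)^(k+1) ∣ (A - 1) → vorder u (u + 2^k)) := by
  have hP : (1:ℤ) ≤ 2^k := one_le_pow₀ one_le_two
  have hnn : (0:ℤ) ≤ u - A + 1 := by omega
  set i₀ : ℕ := (u - A + 1).toNat with hi₀
  have hcast : (i₀ : ℤ) = u - A + 1 := Int.toNat_of_nonneg hnn
  have hui : u - i₀ = A - 1 := by omega
  have hprev : ∀ j : ℕ, j < i₀ → v2 (u + 2^k - j) = v2 (u - j) := by
    intro j hj
    have hjz : (j:ℤ) < (i₀:ℤ) := by exact_mod_cast hj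
    have hjnn : (0:ℤ) ≤ (j:ℤ) := Int.natCast_nonneg j
    have hlt : v2 (u - j) < (k:ℕ∞) := by
      rw [v2_lt_iff]
      intro hdj
      have hd2 : (2:ℤ)^k ∣ (u - j - (A - 1)) := dvd_sub hdj hdvd
      have habs : u - j - (A - 1) = u - A + 1 - j := by ring
      rw [habs] at hd2
      have : u - A + 1 - j = 0 := by
        refine Int.eq_zero_of_abs_lt_dvd hd2 ?_
        rw [abs_lt]
        omega
      omega
    have : u + 2^k - j = (u - j) + 2^k := by ring
    rw [this, v2_add_pow_eq hlt]
  constructor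
  · intro hd2
    have hv1 : ((k:ℕ∞)+1) ≤ v2 (u - i₀) := by
      rw [hui]
      have : ((k+1:ℕ):ℕ∞) ≤ v2 (A - 1) := (v2_le_iff _ _).mpr hd2
      exact_mod_cast this
    have hv2' : v2 (u + 2^k - i₀) = (k:ℕ∞) := by
      have : u + 2^k - i₀ = (u - i₀) + 2^k := by ring
      rw [this]
      exact v2_case1 hv1
    refine ⟨i₀, ?_, hprev⟩
    rw [hv2']
    exact lt_of_lt_of_le (by exact_mod_cast lt_add_one k) hv1
  · intro hd2
    have hv1 : v2 (u - i₀) = (k:ℕ∞) := by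
      rw [hui, v2_eq_iff]
      exact ⟨hdvd, hd2⟩
    have hv2' : ((k:ℕ∞)+1) ≤ v2 (u + 2^k - i₀) := by
      have : u + 2^k - i₀ = (u - i₀) + 2^k := by ring
      rw [this]
      exact v2_case2 hv1
    refine ⟨i₀, ?_, fun j hj => (hprev j hj).symm⟩
    rw [hv1]
    exact lt_of_lt_of_le (by exact_mod_cast lt_add_one k) hv2'

theorem vorder_alternation (k : ℕ) (A B M : ℤ)
    (hBA : B - A = 2 ^ (k + 1) - 1) (hM : M = (A + B - 1) / 2)
    (hvM : (k : ℕ∞) ≤ v2 M)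
    (hvx : ∀ x : ℤ, A ≤ x → x < B → x ≠ M → v2 x < (k : ℕ∞))
    (f : ℕ → ℤ)
    (hmem : ∀ i : ℕ, i < 2 ^ (k + 1) - 1 → A ≤ f i ∧ f i < B)
    (hsurj : ∀ x : ℤ, A ≤ x → x < B → ∃ i : ℕ, i < 2 ^ (k + 1) - 1 ∧ f i = x)
    (hmono : ∀ i j : ℕ, i < j → j < 2 ^ (k + 1) - 1 → vorder (f i) (f j)) :
    ∀ i : ℕ, i + 1 < 2 ^ (k + 1) - 1 →
      (f i < M → M ≤ f (i + 1)) ∧ (M < f i → f (i + 1) ≤ M) := by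
  have hP : (1:ℤ) ≤ 2^k := one_le_pow₀ one_le_two
  have hpow : (2:ℤ)^(k+1) = 2^k * 2 := pow_succ 2 k
  have hMv : M = A + 2^k - 1 := by omega
  have hdvdM : (2:ℤ)^k ∣ M := (v2_le_iff _ _).mp hvM
  have hdvdA : (2:ℤ)^k ∣ (A - 1) := by
    have : A - 1 = M - 2^k := by omega
    rw [this]
    exact dvd_sub hdvdM dvd_rfl
  have between : ∀ i : ℕ, i + 1 < 2^(k+1) - 1 → ∀ w : ℤ, A ≤ w → w < B →
      vorder (f i) w → vorder w (f (i+1)) → False := by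
    intro i hi w hw1 hw2 h1 h2
    obtain ⟨l, hl, rfl⟩ := hsurj w hw1 hw2
    rcases lt_trichotomy l i with h|h|h
    · exact vorder_asymm_s5 (hmono l i h (by omega)) h1
    · subst h; exact vorder_irrefl _ h1
    · rcases lt_trichotomy l (i+1) with h'|h'|h'
      · omega
      · subst h'; exact vorder_irrefl _ h2
      · exact vorder_asymm_s5 (hmono (i+1) l h' hl) h2
  intro i hi
  have hx := hmem i (by omega)
  have hy := hmem (i+1) hi
  set x := f i
  set y := f (i+1)
  have hxy : vorder x y := hmono i (i+1) (lt_add_one i) hi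
  have hne : x ≠ y := fun h => vorder_irrefl y (h ▸ hxy)
  constructor
  · -- x < M → M ≤ y
    intro hxM
    by_contra hyM
    push_neg at hyM
    -- both x, y in [A, M)
    have hndvd : ¬ (2:ℤ)^k ∣ (y - x) := by
      intro hd
      have : y - x = 0 := by
        refine Int.eq_zero_of_abs_lt_dvd hd ?_
        rw [abs_lt]; omega
      exact hne (by omega)
    by_cases hd2 : (2:ℤ)^(k+1) ∣ (A - 1)
    · -- use z' = y + 2^k
      have h1 : vorder (y + 2^k) y := (keyC hMv hdvdA hy.1 hyM).1 hd2
      have hndvd' : ¬ (2:ℤ)^k ∣ (x - y) := by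
        intro hd; apply hndvd
        simpa using dvd_neg.mpr hd
      have h2 : vorder x (y + 2^k) := (keyA2 hndvd').mp hxy
      exact between i hi (y + 2^k) (by omega) (by omega) h2 h1
    · -- use z = x + 2^k
      have h1 : vorder x (x + 2^k) := (keyC hMv hdvdA hx.1 hxM).2 hd2
      have h2 : vorder (x + 2^k) y := (keyA1 hndvd).mp hxy
      exact between i hi (x + 2^k) (by omega) (by omega) h1 h2
  · -- M < x → y ≤ M
    intro hxM
    by_contra hyM
    push_neg at hyM
    by_cases hd2 : (2:ℤ)^(k+1) ∣ (A - 1)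
    · -- use u = x - 2^k
      have hu1 : A ≤ x - 2^k := by omega
      have hu2 : x - 2^k < M := by omega
      have h1 : vorder ((x - 2^k) + 2^k) (x - 2^k) := (keyC hMv hdvdA hu1 hu2).1 hd2
      rw [sub_add_cancel] at h1
      have hndvd : ¬ (2:ℤ)^k ∣ (y - (x - 2^k)) := by
        intro hd
        have hd' : (2:ℤ)^k ∣ (y - x) := by
          have : y - x = (y - (x - 2^k)) - 2^k := by ring
          rw [this]; exact dvd_sub hd dvd_rfl
        have : y - x = 0 := by
          refine Int.eq_zero_of_abs_lt_dvd hd' ?_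
          rw [abs_lt]; omega
        exact hne (by omega)
      have h2 : vorder (x - 2^k) y := by
        have := (keyA1 hndvd).symm.mp (by rwa [sub_add_cancel])
        exact this
      exact between i hi (x - 2^k) (by omega) (by omega) h1 h2
    · -- use w' = y - 2^k
      have hu1 : A ≤ y - 2^k := by omega
      have hu2 : y - 2^k < M := by omega
      have h1 : vorder (y - 2^k) ((y - 2^k) + 2^k) := (keyC hMv hdvdA hu1 hu2).2 hd2
      rw [sub_add_cancel] at h1
      have hndvd : ¬ (2:ℤ)^k ∣ (x - (y - 2^k)) := by
        intro hd
        have hd' : (2:ℤ)^k ∣ (x - y) := by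
          have : x - y = (x - (y - 2^k)) - 2^k := by ring
          rw [this]; exact dvd_sub hd dvd_rfl
        have : x - y = 0 := by
          refine Int.eq_zero_of_abs_lt_dvd hd' ?_
          rw [abs_lt]; omega
        exact hne (by omega)
      have h2 : vorder x (y - 2^k) := by
        have := (keyA2 hndvd).symm.mp (by rwa [sub_add_cancel])
        exact this
      exact between i hi (y - 2^k) (by omega) (by omega) h2 h1
end
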